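/- arXiv:2109.03352 — 3 statements merged into one kernel-verified Lean document; each statement's English description precedes it below -/
import Mathlib

section
/- Every square-zero extension of the algebraic Toeplitz algebra splits: if R is a unital associative ℂ-algebra and p : R → T_alg is a surjective unital ℂ-algebra homomorphism such that x·y = 0 for all x, y in the kernel of p, then there exists a unital ℂ-algebra homomorphism j : T_alg → R with p ∘ j = id on T_alg. -/
/-- The defining relation of the algebraic Toeplitz algebra: `U * V = 1`,
where `U = ι false` and `V = ι true` are the two generators of the free algebra. -/
inductive ToeplitzRel : FreeAlgebra ℂ Bool → FreeAlgebra ℂ Bool → Prop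
  | rel : ToeplitzRel (FreeAlgebra.ι ℂ false * FreeAlgebra.ι ℂ true) 1

/-- The algebraic Toeplitz algebra: the quotient of the free `ℂ`-algebra on two
generators `U, V` by the two-sided ideal generated by `U * V - 1`. -/
abbrev Talg : Type := RingQuot ToeplitzRel

/-- The image `u` of the generator `U` in the algebraic Toeplitz algebra. -/
noncomputable def Tu : Talg := RingQuot.mkAlgHom ℂ ToeplitzRel (FreeAlgebra.ι ℂ false)

/-- The image `v` of the generator `V` in the algebraic Toeplitz algebra. -/
noncomputable def Tv : Talg := RingQuot.mkAlgHom ℂ ToeplitzRel (FreeAlgebra.ι ℂ true)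

lemma Tuv : Tu * Tv = 1 := by
  have h := RingQuot.mkAlgHom_rel ℂ ToeplitzRel.rel
  simpa [Tu, Tv, map_mul, map_one] using h

/-- Every square-zero extension of the algebraic Toeplitz algebra splits. -/
theorem stmt0 (R : Type) [Ring R] [Algebra ℂ R] (p : R →ₐ[ℂ] Talg)
    (hsurj : Function.Surjective p)
    (hsq : ∀ x y : R, p x = 0 → p y = 0 → x * y = 0) :
    ∃ j : Talg →ₐ[ℂ] R, p.comp j = AlgHom.id ℂ Talg := by
  obtain ⟨a, ha⟩ := hsurj Tu
  obtain ⟨b, hb⟩ := hsurj Tv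
  set n : R := a * b - 1 with hn
  have hpn : p n = 0 := by
    simp [hn, map_sub, map_mul, ha, hb, Tuv]
  set b' : R := b * (1 - n) with hb'
  have hab' : a * b' = 1 := by
    have hnn : n * n = 0 := hsq n n hpn hpn
    have : a * b = 1 + n := by rw [hn]; noncomm_ring
    calc a * b' = (a * b) * (1 - n) := by rw [hb', mul_assoc]
    _ = (1 + n) * (1 - n) := by rw [this]
    _ = 1 + n - n - n * n := by noncomm_ring
    _ = 1 := by rw [hnn]; noncomm_ring
  have hpb' : p b' = Tv := by
    simp [hb', map_mul, map_sub, hpn, hb]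
  -- define the lift on the free algebra
  let f : FreeAlgebra ℂ Bool →ₐ[ℂ] R :=
    FreeAlgebra.lift ℂ (fun i => if i then b' else a)
  have hf : ∀ ⦃x y⦄, ToeplitzRel x y → f x = f y := by
    rintro x y ⟨⟩
    simpa [f, map_mul] using hab'
  let j : Talg →ₐ[ℂ] R := RingQuot.liftAlgHom ℂ (Subtype.mk f hf)
  refine ⟨j, ?_⟩
  have hcomp : ∀ x : FreeAlgebra ℂ Bool,
      j (RingQuot.mkAlgHom ℂ ToeplitzRel x) = f x := fun x =>
    RingQuot.liftAlgHom_mkAlgHom_apply ℂ f hf x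
  ext x
  cases x <;>
    simp [AlgHom.comp_apply, hcomp, f, FreeAlgebra.lift_ι_apply, ha, hpb', Tu, Tv]
end

section
/- The monomials v^i u^j, for (i, j) ranging over ℕ × ℕ, form a ℂ-vector space basis of the algebraic Toeplitz algebra T_alg; that is, the family (v^i u^j)_{(i,j)∈ℕ×ℕ} is linearly independent over ℂ and spans T_alg. -/
lemma Tu_pow_mul_Tv_pow (j k : ℕ) : Tu ^ j * Tv ^ k = Tv ^ (k - j) * Tu ^ (j - k) := by
  induction j generalizing k with
  | zero => simp
  | succ j ih =>
    have h1 : ∀ k, Tu * Tv ^ k = Tv ^ (k - 1) * Tu ^ (1 - k) := by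
      intro k
      cases k with
      | zero => simp
      | succ k => simp [pow_succ', ← mul_assoc, Tuv]
    calc Tu ^ (j+1) * Tv ^ k = Tu ^ j * (Tu * Tv ^ k) := by rw [pow_succ, mul_assoc]
    _ = Tu ^ j * (Tv ^ (k-1) * Tu ^ (1-k)) := by rw [h1]
    _ = (Tu ^ j * Tv ^ (k-1)) * Tu ^ (1-k) := by rw [mul_assoc]
    _ = Tv ^ ((k-1) - j) * Tu ^ (j - (k-1)) * Tu ^ (1-k) := by rw [ih]
    _ = Tv ^ (k - (j+1)) * Tu ^ ((j+1) - k) := by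
        rw [mul_assoc, ← pow_add]
        congr 2 <;> omega

noncomputable def Ushift : (ℕ →₀ ℂ) →ₗ[ℂ] (ℕ →₀ ℂ) :=
  Finsupp.lsum ℂ fun n => match n with
    | 0 => 0
    | m + 1 => Finsupp.lsingle m

noncomputable def Vshift : (ℕ →₀ ℂ) →ₗ[ℂ] (ℕ →₀ ℂ) :=
  Finsupp.lsum ℂ fun n => Finsupp.lsingle (n + 1)

@[simp] lemma Ushift_single_zero (c : ℂ) : Ushift (Finsupp.single 0 c) = 0 := by
  simp [Ushift]

@[simp] lemma Ushift_single_succ (m : ℕ) (c : ℂ) :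
    Ushift (Finsupp.single (m + 1) c) = Finsupp.single m c := by
  simp [Ushift]

@[simp] lemma Vshift_single (n : ℕ) (c : ℂ) :
    Vshift (Finsupp.single n c) = Finsupp.single (n + 1) c := by
  simp [Vshift]

lemma UV_eq_one : (Ushift * Vshift : Module.End ℂ (ℕ →₀ ℂ)) = 1 := by
  apply Finsupp.lhom_ext
  intro n c
  show Ushift (Vshift (Finsupp.single n c)) = Finsupp.single n c
  simp

noncomputable def Trep : Talg →ₐ[ℂ] Module.End ℂ (ℕ →₀ ℂ) :=
  RingQuot.liftAlgHom ℂ ⟨FreeAlgebra.lift ℂ (fun b => bif b then Vshift else Ushift), by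
    rintro _ _ ⟨⟩
    simp [UV_eq_one]⟩

@[simp] lemma Trep_Tu : Trep Tu = Ushift := by
  simp [Trep, Tu, RingQuot.liftAlgHom_mkAlgHom_apply]

@[simp] lemma Trep_Tv : Trep Tv = Vshift := by
  simp [Trep, Tv, RingQuot.liftAlgHom_mkAlgHom_apply]

lemma Ushift_pow (j n : ℕ) (c : ℂ) :
    (Ushift ^ j) (Finsupp.single n c) =
      if j ≤ n then Finsupp.single (n - j) c else 0 := by
  induction j generalizing n with
  | zero => simp
  | succ j ih =>
    rw [pow_succ, Module.End.mul_apply]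
    cases n with
    | zero => simp [Nat.succ_le_iff]
    | succ n =>
      rw [Ushift_single_succ, ih]
      split_ifs with h1 h2 h2 <;> first | rfl | omega | (congr 1; omega)

lemma Vshift_pow (i n : ℕ) (c : ℂ) :
    (Vshift ^ i) (Finsupp.single n c) = Finsupp.single (n + i) c := by
  induction i generalizing n with
  | zero => simp
  | succ i ih =>
    rw [pow_succ', Module.End.mul_apply, ih, Vshift_single]
    rw [Nat.add_assoc]

lemma Trep_mono (i j n : ℕ) :
    Trep (Tv ^ i * Tu ^ j) (Finsupp.single n 1) =
      if j ≤ n then Finsupp.single (n - j + i) 1 else 0 := by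
  rw [map_mul, map_pow, map_pow, Trep_Tu, Trep_Tv, Module.End.mul_apply, Ushift_pow]
  split_ifs with h
  · rw [Vshift_pow]
  · simp

/-- The monomials `v^i * u^j`, `(i,j) ∈ ℕ × ℕ`, form a `ℂ`-vector space basis of the
algebraic Toeplitz algebra: they are linearly independent and span the whole algebra. -/
theorem stmt1 :
    LinearIndependent ℂ (fun ij : ℕ × ℕ => Tv ^ ij.1 * Tu ^ ij.2) ∧
    Submodule.span ℂ (Set.range fun ij : ℕ × ℕ => Tv ^ ij.1 * Tu ^ ij.2) = ⊤ := by
  constructor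
  · rw [linearIndependent_iff']
    intro s g hsum
    have key : ∀ (n m : ℕ),
        (∑ ij ∈ s, g ij * (if ij.2 ≤ n then (if n - ij.2 + ij.1 = m then (1:ℂ) else 0) else 0))
          = 0 := by
      intro n m
      have h1 : (Trep (∑ ij ∈ s, g ij • (Tv ^ ij.1 * Tu ^ ij.2))) (Finsupp.single n 1) m = 0 := by
        rw [hsum]; simp
      rw [map_sum] at h1
      simp only [map_smul, LinearMap.sum_apply, LinearMap.smul_apply,
        Finsupp.coe_finset_sum, Finset.sum_apply, Finsupp.smul_apply, Trep_mono,
        smul_eq_mul, apply_ite (fun f : ℕ →₀ ℂ => f m), Finsupp.single_apply,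
        Finsupp.zero_apply] at h1
      exact h1
    suffices H : ∀ j₀ i₀, (i₀, j₀) ∈ s → g (i₀, j₀) = 0 by
      rintro ⟨i, j⟩ hij; exact H j i hij
    intro j₀
    induction j₀ using Nat.strong_induction_on with
    | _ j₀ IH =>
      intro i₀ hij
      have h := key j₀ i₀
      have hzero : ∀ ij ∈ s, ij ≠ (i₀, j₀) →
          g ij * (if ij.2 ≤ j₀ then (if j₀ - ij.2 + ij.1 = i₀ then (1:ℂ) else 0) else 0) = 0 := by
        rintro ⟨i, j⟩ hmem hne
        rcases lt_trichotomy j j₀ with hj | rfl | hj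
        · rw [IH j hj i hmem, zero_mul]
        · have hne' : i ≠ i₀ := by rintro rfl; exact hne rfl
          have : ¬ (j - j + i = i₀) := by omega
          simp only [le_refl, if_true, this, if_false, mul_zero]
        · have : ¬ j ≤ j₀ := by omega
          simp [this]
      rw [Finset.sum_eq_single_of_mem (i₀, j₀) hij hzero] at h
      simpa using h
  · set S := Submodule.span ℂ (Set.range fun ij : ℕ × ℕ => Tv ^ ij.1 * Tu ^ ij.2) with hS
    have hmem : ∀ i j, Tv ^ i * Tu ^ j ∈ S := fun i j => Submodule.subset_span ⟨(i, j), rfl⟩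
    have hmono : ∀ i j k l : ℕ,
        (Tv ^ i * Tu ^ j) * (Tv ^ k * Tu ^ l) = Tv ^ (i + (k - j)) * Tu ^ ((j - k) + l) := by
      intro i j k l
      calc (Tv ^ i * Tu ^ j) * (Tv ^ k * Tu ^ l)
          = Tv ^ i * (Tu ^ j * Tv ^ k) * Tu ^ l := by noncomm_ring
        _ = Tv ^ i * (Tv ^ (k - j) * Tu ^ (j - k)) * Tu ^ l := by rw [Tu_pow_mul_Tv_pow]
        _ = Tv ^ (i + (k - j)) * Tu ^ ((j - k) + l) := by rw [pow_add, pow_add]; noncomm_ring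
    have hmul : ∀ x ∈ S, ∀ y ∈ S, x * y ∈ S := by
      intro x hx y hy
      have hxy : x * y ∈ S * S := Submodule.mul_mem_mul hx hy
      have hSS : S * S ≤ S := by
        rw [hS, Submodule.span_mul_span]
        rw [Submodule.span_le]
        rintro _ ⟨_, ⟨⟨i, j⟩, rfl⟩, _, ⟨⟨k, l⟩, rfl⟩, rfl⟩
        simp only
        rw [hmono]
        exact Submodule.subset_span ⟨(i + (k - j), (j - k) + l), rfl⟩
      exact hSS hxy
    have hall : ∀ x : Talg, x ∈ S := by
      intro x
      obtain ⟨y, rfl⟩ := RingQuot.mkAlgHom_surjective ℂ ToeplitzRel x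
      induction y using FreeAlgebra.induction with
      | grade0 r =>
          rw [AlgHom.commutes, Algebra.algebraMap_eq_smul_one]
          exact S.smul_mem r (by simpa using hmem 0 0)
      | grade1 b =>
          cases b
          · simpa [Tu] using hmem 0 1
          · simpa [Tv] using hmem 1 0
      | mul a b ha hb => rw [map_mul]; exact hmul _ ha _ hb
      | add a b ha hb => rw [map_add]; exact S.add_mem ha hb
    exact Submodule.eq_top_iff'.mpr hall
end

section
/- For every element a of T_alg and every k ∈ ℕ the following two inequalities hold: ‖a‖'_k ≤ ‖a‖_{k+1} and ‖a‖_k ≤ (4^k + 1) · ‖a‖'_{2k}. Here, writing a uniquely as a finite sum a = Σ_{i,j} c_{ij} v^i u^j, one sets ‖a‖_k := Σ_{i,j} |c_{ij}| (1+i)^k (1+j)^k; and writing a uniquely as a finite sum a = b_0·1 + Σ_{p≥1} b_p v^p + Σ_{p≥1} b_{−p} u^p + Σ_{i,j} a_{ij} e_{i,j}, one sets ‖a‖'_k := Σ_{i,j} |a_{ij}| (1+i+j)^k + Σ_{p∈ℤ} |b_p| (1+|p|)^k. In particular the two families of norms {‖·‖_k} and {‖·‖'_k} on T_alg are equivalent.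 -/
/-- The matrix units `e_{i,j} = v^i (1 - v u) u^j` of the algebraic Toeplitz algebra. -/
noncomputable def Te (i j : ℕ) : Talg := Tv ^ i * (1 - Tv * Tu) * Tu ^ j

/-- `z^p` interpreted in the algebraic Toeplitz algebra: `v^p` for `p ≥ 0`
and `u^{-p}` for `p < 0`. -/
noncomputable def Tz (p : ℤ) : Talg := if 0 ≤ p then Tv ^ p.toNat else Tu ^ (-p).toNat

noncomputable section

abbrev MM : Type := ℕ →₀ ℂ

def Vop : MM →ₗ[ℂ] MM := Finsupp.lsum ℂ fun n => Finsupp.lsingle (n + 1)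

def Uop : MM →ₗ[ℂ] MM :=
  Finsupp.lsum ℂ fun n => match n with
    | 0 => 0
    | m + 1 => Finsupp.lsingle m

@[simp] lemma Vop_single (n : ℕ) (x : ℂ) :
    Vop (Finsupp.single n x) = Finsupp.single (n + 1) x := by
  simp [Vop]

@[simp] lemma Uop_single_zero (x : ℂ) : Uop (Finsupp.single 0 x) = 0 := by
  simp [Uop]

@[simp] lemma Uop_single_succ (m : ℕ) (x : ℂ) :
    Uop (Finsupp.single (m + 1) x) = Finsupp.single m x := by
  simp [Uop]

lemma UV_eq_one_s14 : Uop * Vop = 1 := by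
  apply Finsupp.lhom_ext (φ := Uop * Vop) (ψ := 1)
  intro n x
  simp [Module.End.mul_apply]

def rep : Talg →ₐ[ℂ] Module.End ℂ MM :=
  RingQuot.liftAlgHom ℂ ⟨FreeAlgebra.lift ℂ (fun b => bif b then Vop else Uop), by
    rintro _ _ ⟨⟩
    simp [UV_eq_one_s14]⟩

@[simp] lemma rep_Tu : rep Tu = Uop := by
  simp [rep, Tu, RingQuot.liftAlgHom_mkAlgHom_apply]

@[simp] lemma rep_Tv : rep Tv = Vop := by
  simp [rep, Tv, RingQuot.liftAlgHom_mkAlgHom_apply]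

lemma Vop_pow (i n : ℕ) (x : ℂ) :
    (Vop ^ i) (Finsupp.single n x) = Finsupp.single (n + i) x := by
  induction i generalizing n with
  | zero => simp
  | succ i ih =>
    rw [pow_succ, Module.End.mul_apply, Vop_single, ih,
      show n + 1 + i = n + (i + 1) from by omega]

lemma Uop_pow (j n : ℕ) (x : ℂ) :
    (Uop ^ j) (Finsupp.single n x)
      = if j ≤ n then Finsupp.single (n - j) x else 0 := by
  induction j generalizing n with
  | zero => simp
  | succ j ih =>
    rw [pow_succ, Module.End.mul_apply]
    match n with
    | 0 => simp
    | m + 1 =>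
      rw [Uop_single_succ, ih]
      by_cases h : j ≤ m
      · rw [if_pos h, if_pos (by omega)]
        congr 1
        omega
      · rw [if_neg h, if_neg (by omega)]

/-- matrix entry functional -/
def ent (m n : ℕ) : Talg →ₗ[ℂ] ℂ :=
  (Finsupp.lapply m) ∘ₗ (LinearMap.applyₗ (Finsupp.single n 1)) ∘ₗ rep.toLinearMap

lemma ent_apply (m n : ℕ) (a : Talg) : ent m n a = (rep a) (Finsupp.single n 1) m := rfl

lemma ent_vu (m n i j : ℕ) :
    ent m n (Tv ^ i * Tu ^ j)
      = if j ≤ n ∧ n - j + i = m then 1 else 0 := by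
  rw [ent_apply, map_mul, map_pow, map_pow, rep_Tu, rep_Tv, Module.End.mul_apply, Uop_pow]
  by_cases h : j ≤ n
  · rw [if_pos h, Vop_pow, Finsupp.single_apply]
    by_cases h2 : n - j + i = m
    · rw [if_pos h2, if_pos ⟨h, h2⟩]
    · rw [if_neg h2, if_neg (by tauto)]
  · rw [if_neg h, map_zero, if_neg (by tauto)]
    rfl

lemma ent_Te (m n i j : ℕ) :
    ent m n (Te i j) = if i = m ∧ j = n then 1 else 0 := by
  rw [ent_apply, Te, map_mul, map_mul, map_pow, map_pow, map_sub, map_one, map_mul,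
    rep_Tu, rep_Tv, Module.End.mul_apply, Module.End.mul_apply, Uop_pow]
  by_cases h : j ≤ n
  · rw [if_pos h, LinearMap.sub_apply, Module.End.one_apply, Module.End.mul_apply]
    match hn : n - j with
    | 0 =>
      rw [Uop_single_zero, map_zero, sub_zero, Vop_pow, Finsupp.single_apply]
      by_cases h2 : i = m
      · rw [if_pos (by omega), if_pos ⟨h2, by omega⟩]
      · rw [if_neg (by omega), if_neg (by tauto)]
    | s + 1 =>
      rw [Uop_single_succ, Vop_single, sub_self, map_zero, if_neg (by omega)]
      rfl
  · rw [if_neg h, map_zero, map_zero, if_neg (by omega)]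
    rfl

lemma ent_Tz (m n : ℕ) (p : ℤ) :
    ent m n (Tz p) = if (m : ℤ) - (n : ℤ) = p then 1 else 0 := by
  rw [ent_apply, Tz]
  by_cases h : 0 ≤ p
  · rw [if_pos h, map_pow, rep_Tv, Vop_pow, Finsupp.single_apply]
    by_cases h2 : n + p.toNat = m
    · rw [if_pos h2, if_pos (by omega)]
    · rw [if_neg h2, if_neg (by omega)]
  · rw [if_neg h, map_pow, rep_Tu, Uop_pow]
    by_cases h2 : (-p).toNat ≤ n
    · rw [if_pos h2, Finsupp.single_apply]
      by_cases h3 : n - (-p).toNat = m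
      · rw [if_pos h3, if_pos (by omega)]
      · rw [if_neg h3, if_neg (by omega)]
    · rw [if_neg h2, if_neg (by omega)]
      rfl

lemma sumdelta {α : Type*} [DecidableEq α] (f : α →₀ ℂ) (a : α) :
    (f.sum fun x v => if x = a then v else 0) = f a := by
  rw [Finsupp.sum, Finset.sum_ite_eq' f.support a (fun x => f x)]
  split_ifs with h
  · rfl
  · exact (Finsupp.notMem_support_iff.mp h).symm

lemma sum_le_sum_inj {α β : Type*} [DecidableEq α] [DecidableEq β]
    (s : Finset α) (t : Finset β) (φ : α → β) (f : α → ℝ) (h : β → ℝ)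
    (hnn : ∀ b ∈ t, 0 ≤ h b) (hf0 : ∀ a ∈ s, 0 ≤ f a)
    (hf : ∀ a ∈ s, f a ≤ h (φ a))
    (ht : ∀ a ∈ s, f a ≠ 0 → φ a ∈ t)
    (hinj : ∀ a₁ ∈ s, ∀ a₂ ∈ s, f a₁ ≠ 0 → f a₂ ≠ 0 → φ a₁ = φ a₂ → a₁ = a₂) :
    ∑ a ∈ s, f a ≤ ∑ b ∈ t, h b := by
  classical
  rw [← Finset.sum_filter_ne_zero s (f := f)]
  set s' := s.filter (fun a => f a ≠ 0) with hs'
  have hsub : s' ⊆ s := Finset.filter_subset _ _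
  have step1 : ∑ a ∈ s', f a ≤ ∑ a ∈ s', h (φ a) :=
    Finset.sum_le_sum fun a ha => hf a (hsub ha)
  have step2 : ∑ a ∈ s', h (φ a) = ∑ b ∈ s'.image φ, h b := by
    rw [Finset.sum_image]
    intro a₁ h₁ a₂ h₂ hφ
    exact hinj a₁ (hsub h₁) a₂ (hsub h₂) (Finset.mem_filter.mp h₁).2
      (Finset.mem_filter.mp h₂).2 hφ
  have step3 : ∑ b ∈ s'.image φ, h b ≤ ∑ b ∈ t, h b := by
    apply Finset.sum_le_sum_of_subset_of_nonneg
    · intro b hb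
      obtain ⟨a, ha, rfl⟩ := Finset.mem_image.mp hb
      exact ht a (hsub ha) (Finset.mem_filter.mp ha).2
    · intro i hi _
      exact hnn i hi
  linarith

section Identities

variable (a : Talg) (c : ℕ × ℕ →₀ ℂ) (b : ℤ →₀ ℂ) (am : ℕ × ℕ →₀ ℂ)
variable (h1 : a = c.sum fun ij x => x • (Tv ^ ij.1 * Tu ^ ij.2))
variable (h2 : a = (b.sum fun p x => x • Tz p) + am.sum fun ij x => x • Te ij.1 ij.2)

include h1 in
lemma entc (m n : ℕ) :
    ent m n a
      = c.sum fun s x => x * (if s.2 ≤ n ∧ n - s.2 + s.1 = m then 1 else 0) := by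
  rw [h1, map_finsuppSum]
  exact Finsupp.sum_congr fun s _ => by rw [map_smul, ent_vu, smul_eq_mul]

include h2 in
lemma entb (m n : ℕ) : ent m n a = b ((m : ℤ) - (n : ℤ)) + am (m, n) := by
  rw [h2, map_add, map_finsuppSum, map_finsuppSum]
  congr 1
  · rw [Finsupp.sum_congr (g2 := fun p x => if p = (m : ℤ) - (n : ℤ) then x else 0)
      (fun p _ => by
        simp only [map_smul, ent_Tz, smul_eq_mul]
        by_cases h : (m : ℤ) - (n : ℤ) = p
        · rw [if_pos h, if_pos h.symm, mul_one]
        · rw [if_neg h, if_neg (fun hh => h hh.symm), mul_zero]), sumdelta]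
  · rw [Finsupp.sum_congr (g2 := fun s x => if s = (m, n) then x else 0)
      (fun s _ => by
        rcases s with ⟨i, j⟩
        simp only [map_smul, ent_Te, smul_eq_mul, Prod.mk.injEq]
        by_cases h : i = m ∧ j = n
        · rw [if_pos h, if_pos h, mul_one]
        · rw [if_neg h, if_neg h, mul_zero]), sumdelta]

include h1 in
lemma Ic0 (i : ℕ) : c (i, 0) = ent i 0 a := by
  rw [entc a c h1, Finsupp.sum_congr (g2 := fun s x => if s = (i, 0) then x else 0)
    (fun s _ => by
      rcases s with ⟨p, q⟩
      simp only [Prod.mk.injEq]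
      split_ifs <;> first | (exfalso; omega) | exact mul_one _ | exact mul_zero _), sumdelta]

include h1 in
lemma I0j (j : ℕ) : c (0, j) = ent 0 j a := by
  rw [entc a c h1, Finsupp.sum_congr (g2 := fun s x => if s = (0, j) then x else 0)
    (fun s _ => by
      rcases s with ⟨p, q⟩
      simp only [Prod.mk.injEq]
      split_ifs <;> first | (exfalso; omega) | exact mul_one _ | exact mul_zero _), sumdelta]

include h1 in
lemma Isucc (i j : ℕ) :
    c (i + 1, j + 1) = ent (i + 1) (j + 1) a - ent i j a := by
  rw [entc a c h1, entc a c h1, ← Finsupp.sum_sub,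
    Finsupp.sum_congr (g2 := fun s x => if s = (i + 1, j + 1) then x else 0)
    (fun s _ => by
      rcases s with ⟨p, q⟩
      dsimp only
      simp only [Prod.mk.injEq]
      split_ifs <;> first | (exfalso; omega) | ring1), sumdelta]

include h1 h2 in
lemma K1 (i j : ℕ) : c (i + 1, j + 1) = am (i + 1, j + 1) - am (i, j) := by
  rw [Isucc a c h1, entb a b am h2, entb a b am h2,
    show ((i + 1 : ℕ) : ℤ) - ((j + 1 : ℕ) : ℤ) = (i : ℤ) - j from by push_cast; ring]
  push_cast
  ring

include h1 h2 in
lemma K2a (i : ℕ) : c (i, 0) = b i + am (i, 0) := by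
  rw [Ic0 a c h1, entb a b am h2]
  norm_num

include h1 h2 in
lemma K2b (j : ℕ) : c (0, j) = b (-(j : ℤ)) + am (0, j) := by
  rw [I0j a c h1, entb a b am h2]
  norm_num

variable {N : ℕ}

include h1 h2 in
lemma AmId (ham : ∀ m n : ℕ, N ≤ m → am (m, n) = 0) (m n : ℕ) :
    am (m, n) = -∑ t ∈ Finset.range N, c (m + t + 1, n + t + 1) := by
  have tel : ∑ t ∈ Finset.range N, c (m + t + 1, n + t + 1)
      = am (m + N, n + N) - am (m, n) := by
    have h := Finset.sum_range_sub (fun t => am (m + t, n + t)) N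
    simp only [Nat.add_zero] at h
    rw [← h]
    exact Finset.sum_congr rfl fun t _ => K1 a c b am h1 h2 (m + t) (n + t)
  rw [ham (m + N) (n + N) (by omega), zero_sub] at tel
  rw [tel, neg_neg]

include h1 h2 in
lemma B1Id (ham : ∀ m n : ℕ, N ≤ m → am (m, n) = 0) (d : ℕ) :
    b (d : ℤ) = ∑ t ∈ Finset.range (N + 1), c (d + t, t) := by
  rw [Finset.sum_range_succ' (fun t => c (d + t, t)) N]
  have e1 : ∑ i ∈ Finset.range N, c (d + (i + 1), i + 1)
      = ∑ t ∈ Finset.range N, c (d + t + 1, 0 + t + 1) :=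
    Finset.sum_congr rfl fun t _ => congrArg c (by rw [Prod.mk.injEq]; omega)
  rw [e1]
  simp only [Nat.add_zero]
  have h0 := K2a a c b am h1 h2 d
  have hA := AmId a c b am h1 h2 ham d 0
  linear_combination -h0 - hA

include h1 h2 in
lemma B2Id (ham : ∀ m n : ℕ, N ≤ m → am (m, n) = 0) (d : ℕ) :
    b (-(d : ℤ)) = ∑ t ∈ Finset.range (N + 1), c (t, d + t) := by
  rw [Finset.sum_range_succ' (fun t => c (t, d + t)) N]
  have e1 : ∑ i ∈ Finset.range N, c (i + 1, d + (i + 1))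
      = ∑ t ∈ Finset.range N, c (0 + t + 1, d + t + 1) :=
    Finset.sum_congr rfl fun t _ => congrArg c (by rw [Prod.mk.injEq]; omega)
  rw [e1]
  simp only [Nat.add_zero]
  have h0 := K2b a c b am h1 h2 d
  have hA := AmId a c b am h1 h2 ham 0 d
  linear_combination -h0 - hA

include h1 h2 in
lemma Cterm (s : ℕ × ℕ) :
    ‖c s‖ ≤ ‖am s‖ + (if 1 ≤ s.1 ∧ 1 ≤ s.2 then ‖am (s.1 - 1, s.2 - 1)‖ else 0)
      + (if s.2 = 0 then ‖b (s.1 : ℤ)‖ else if s.1 = 0 then ‖b (-(s.2 : ℤ))‖ else 0) := by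
  rcases s with ⟨i, j⟩
  match i, j with
  | i, 0 =>
    rw [K2a a c b am h1 h2 i]
    simp only []
    rw [if_neg (by omega), if_pos trivial]
    have := norm_add_le (b (i : ℤ)) (am (i, 0))
    linarith
  | 0, j + 1 =>
    rw [K2b a c b am h1 h2 (j + 1)]
    simp only []
    rw [if_neg (by omega), if_neg (by omega), if_pos trivial]
    have := norm_add_le (b (-((j + 1 : ℕ) : ℤ))) (am (0, j + 1))
    linarith
  | i + 1, j + 1 =>
    rw [K1 a c b am h1 h2 i j]
    simp only []
    rw [if_pos (by omega), if_neg (by omega), if_neg (by omega)]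
    have := norm_sub_le (am (i + 1, j + 1)) (am (i, j))
    simpa using this

end Identities

section RealAux

lemma waux1 (k : ℕ) (i j : ℕ) :
    (1 + (i : ℝ)) ^ k * (1 + (j : ℝ)) ^ k ≤ (1 + (i : ℝ) + (j : ℝ)) ^ (2 * k) := by
  have hi : (0:ℝ) ≤ i := Nat.cast_nonneg i
  have hj : (0:ℝ) ≤ j := Nat.cast_nonneg j
  rw [← mul_pow, pow_mul]
  apply pow_le_pow_left₀ (by positivity)
  nlinarith

lemma waux2 (k : ℕ) (i j : ℕ) :
    (1 + ((i : ℝ) + 1)) ^ k * (1 + ((j : ℝ) + 1)) ^ k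
      ≤ 4 ^ k * (1 + (i : ℝ) + (j : ℝ)) ^ (2 * k) := by
  have hi : (0:ℝ) ≤ i := Nat.cast_nonneg i
  have hj : (0:ℝ) ≤ j := Nat.cast_nonneg j
  rw [← mul_pow, pow_mul, ← mul_pow]
  apply pow_le_pow_left₀ (by positivity)
  nlinarith

end RealAux

section MainParts

variable (a : Talg) (c : ℕ × ℕ →₀ ℂ) (b : ℤ →₀ ℂ) (am : ℕ × ℕ →₀ ℂ)
variable (h1 : a = c.sum fun ij x => x • (Tv ^ ij.1 * Tu ^ ij.2))
variable (h2 : a = (b.sum fun p x => x • Tz p) + am.sum fun ij x => x • Te ij.1 ij.2)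

lemma waux2' (k : ℕ) (x y : ℝ) (hx : 1 ≤ x) (hy : 1 ≤ y) :
    (1 + x) ^ k * (1 + y) ^ k ≤ 4 ^ k * (1 + (x - 1) + (y - 1)) ^ (2 * k) := by
  rw [← mul_pow, pow_mul, ← mul_pow]
  apply pow_le_pow_left₀ (by nlinarith)
  nlinarith [mul_nonneg (sub_nonneg.mpr hx) (sub_nonneg.mpr hy), sq_nonneg (x + y - 2)]

lemma waux3 (k i : ℕ) : (1 + (i : ℝ)) ^ k * (1 + ((0:ℕ) : ℝ)) ^ k ≤ (1 + (i : ℝ)) ^ (2 * k) := by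
  norm_num
  exact pow_le_pow_right₀ (le_add_of_nonneg_right (Nat.cast_nonneg i)) (by omega)

include h1 h2 in
lemma part2 (k : ℕ) :
    (c.sum fun ij x => ‖x‖ * ((1 + (ij.1 : ℝ)) ^ k * (1 + (ij.2 : ℝ)) ^ k))
      ≤ (4 ^ k + 1) *
        ((am.sum fun ij x => ‖x‖ * (1 + (ij.1 : ℝ) + (ij.2 : ℝ)) ^ (2 * k))
          + b.sum fun p x => ‖x‖ * (1 + (p.natAbs : ℝ)) ^ (2 * k)) := by
  classical
  have h4nn : (0:ℝ) ≤ 4 ^ k := by positivity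
  have hTAnn : (0:ℝ) ≤ am.sum fun ij x => ‖x‖ * (1 + (ij.1:ℝ) + (ij.2:ℝ)) ^ (2*k) :=
    Finset.sum_nonneg fun s _ => by positivity
  have hTBnn : (0:ℝ) ≤ b.sum fun p x => ‖x‖ * (1 + (p.natAbs:ℝ)) ^ (2*k) :=
    Finset.sum_nonneg fun s _ => by positivity
  rw [Finsupp.sum, Finsupp.sum, Finsupp.sum]
  set W : ℕ × ℕ → ℝ := fun s => (1 + (s.1 : ℝ)) ^ k * (1 + (s.2 : ℝ)) ^ k with hW
  have hWnn : ∀ s, 0 ≤ W s := fun s => by rw [hW]; positivity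
  have key : ∀ s ∈ c.support,
      ‖c s‖ * ((1 + (s.1:ℝ)) ^ k * (1 + (s.2:ℝ)) ^ k)
        ≤ ‖am s‖ * W s
          + (if 1 ≤ s.1 ∧ 1 ≤ s.2 then ‖am (s.1 - 1, s.2 - 1)‖ else 0) * W s
          + (if s.2 = 0 then ‖b (s.1 : ℤ)‖ else if s.1 = 0 then ‖b (-(s.2 : ℤ))‖ else 0)
            * W s := by
    intro s _
    have hc := Cterm a c b am h1 h2 s
    have := mul_le_mul_of_nonneg_right hc (hWnn s)
    rw [add_mul, add_mul] at this
    exact this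
  calc ∑ s ∈ c.support, ‖c s‖ * ((1 + (s.1:ℝ)) ^ k * (1 + (s.2:ℝ)) ^ k)
      ≤ ∑ s ∈ c.support, (‖am s‖ * W s
          + (if 1 ≤ s.1 ∧ 1 ≤ s.2 then ‖am (s.1 - 1, s.2 - 1)‖ else 0) * W s
          + (if s.2 = 0 then ‖b (s.1 : ℤ)‖ else if s.1 = 0 then ‖b (-(s.2 : ℤ))‖ else 0)
            * W s) := Finset.sum_le_sum key
    _ = (∑ s ∈ c.support, ‖am s‖ * W s)
          + (∑ s ∈ c.support,
              (if 1 ≤ s.1 ∧ 1 ≤ s.2 then ‖am (s.1 - 1, s.2 - 1)‖ else 0) * W s)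
          + ∑ s ∈ c.support,
              (if s.2 = 0 then ‖b (s.1 : ℤ)‖ else if s.1 = 0 then ‖b (-(s.2 : ℤ))‖ else 0)
                * W s := by
        rw [Finset.sum_add_distrib, Finset.sum_add_distrib]
    _ ≤ (∑ s ∈ am.support, ‖am s‖ * (1 + (s.1:ℝ) + (s.2:ℝ)) ^ (2*k))
          + 4 ^ k * (∑ s ∈ am.support, ‖am s‖ * (1 + (s.1:ℝ) + (s.2:ℝ)) ^ (2*k))
          + ∑ p ∈ b.support, ‖b p‖ * (1 + (p.natAbs:ℝ)) ^ (2*k) := by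
        apply add_le_add (add_le_add ?S1 ?S2) ?S3
        case S1 =>
          apply sum_le_sum_inj c.support am.support (fun s => s) _ _
            (fun s _ => by positivity)
            (fun s _ => mul_nonneg (norm_nonneg _) (hWnn s))
          · intro s _
            rw [hW]
            exact mul_le_mul_of_nonneg_left (waux1 k s.1 s.2) (norm_nonneg _)
          · intro s _ hs
            rw [Finsupp.mem_support_iff]
            intro h0
            exact hs (by rw [h0, norm_zero, zero_mul])
          · intro s₁ _ s₂ _ _ _ h
            exact h
        case S2 =>
          rw [Finset.mul_sum]
          apply sum_le_sum_inj c.support am.support (fun s => (s.1 - 1, s.2 - 1)) _ _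
            (fun s _ => by positivity)
            (fun s _ => mul_nonneg (by split_ifs
                                       · exact norm_nonneg _
                                       · exact le_refl 0) (hWnn s))
          · intro s _
            by_cases hc : 1 ≤ s.1 ∧ 1 ≤ s.2
            · rw [if_pos hc, hW]
              dsimp only
              rw [mul_comm (4 ^ k : ℝ) _, mul_assoc]
              apply mul_le_mul_of_nonneg_left _ (norm_nonneg _)
              rw [mul_comm ((1 + ((s.1 - 1 : ℕ):ℝ) + ((s.2 - 1 : ℕ):ℝ)) ^ (2*k)) _,
                Nat.cast_sub hc.1, Nat.cast_sub hc.2, Nat.cast_one]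
              exact waux2' k s.1 s.2 (Nat.one_le_cast.mpr hc.1) (Nat.one_le_cast.mpr hc.2)
            · rw [if_neg hc, zero_mul]
              positivity
          · intro s _ hs
            rw [Finsupp.mem_support_iff]
            intro h0
            apply hs
            split_ifs with hpq
            · rw [h0, norm_zero, zero_mul]
            · rw [zero_mul]
          · intro s₁ _ s₂ _ hf1 hf2 h
            simp only [Prod.mk.injEq] at h
            have e1 : 1 ≤ s₁.1 ∧ 1 ≤ s₁.2 := by
              by_contra hcon
              rw [if_neg hcon, zero_mul] at hf1
              exact hf1 rfl
            have e2 : 1 ≤ s₂.1 ∧ 1 ≤ s₂.2 := by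
              by_contra hcon
              rw [if_neg hcon, zero_mul] at hf2
              exact hf2 rfl
            have : s₁.1 = s₂.1 ∧ s₁.2 = s₂.2 := by omega
            exact Prod.ext this.1 this.2
        case S3 =>
          apply sum_le_sum_inj c.support b.support
            (fun s => if s.2 = 0 then (s.1 : ℤ) else -(s.2 : ℤ)) _ _
            (fun p _ => by positivity)
            (fun s _ => mul_nonneg (by split_ifs
                                       · exact norm_nonneg _
                                       · exact norm_nonneg _
                                       · exact le_refl 0) (hWnn s))
          · intro s _
            by_cases hq : s.2 = 0
            · rw [if_pos hq, if_pos hq, hW]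
              dsimp only
              apply mul_le_mul_of_nonneg_left _ (norm_nonneg _)
              rw [hq]
              simpa using waux3 k s.1
            · by_cases hp : s.1 = 0
              · rw [if_neg hq, if_neg hq, if_pos hp, hW]
                dsimp only
                apply mul_le_mul_of_nonneg_left _ (norm_nonneg _)
                rw [hp]
                simp only [Int.natAbs_neg, Int.natAbs_natCast, Nat.cast_zero, add_zero,
                  one_pow, one_mul]
                exact pow_le_pow_right₀ (le_add_of_nonneg_right (Nat.cast_nonneg _))
                  (by omega)
              · rw [if_neg hq, if_neg hp, zero_mul]
                positivity
          · intro s _ hs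
            rw [Finsupp.mem_support_iff]
            split_ifs at hs ⊢ with hq hp
            · intro h0
              exact hs (by rw [h0, norm_zero, zero_mul])
            · intro h0
              exact hs (by rw [h0, norm_zero, zero_mul])
            · exact absurd (zero_mul _) hs
          · intro s₁ _ s₂ _ hf1 hf2 h
            split_ifs at hf1 hf2 h <;>
              first
                | exact absurd (zero_mul _) hf1
                | exact absurd (zero_mul _) hf2
                | exact Prod.ext (by omega) (by omega)
    _ ≤ (4 ^ k + 1) *
        ((∑ s ∈ am.support, ‖am s‖ * (1 + (s.1:ℝ) + (s.2:ℝ)) ^ (2*k))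
          + ∑ p ∈ b.support, ‖b p‖ * (1 + (p.natAbs:ℝ)) ^ (2*k)) := by
        rw [Finsupp.sum] at hTAnn hTBnn
        nlinarith [mul_nonneg h4nn hTBnn, mul_nonneg h4nn hTAnn]

lemma waux4 (k a b t : ℕ) :
    (1 + (a:ℝ) + (b:ℝ)) ^ k ≤ (1 + ((a + t + 1 : ℕ):ℝ)) ^ k * (1 + ((b + t + 1 : ℕ):ℝ)) ^ k := by
  rw [← mul_pow]
  apply pow_le_pow_left₀ (by positivity)
  push_cast
  nlinarith [Nat.cast_nonneg (α := ℝ) a, Nat.cast_nonneg (α := ℝ) b, Nat.cast_nonneg (α := ℝ) t]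

lemma waux5 (k a t : ℕ) :
    (1 + (a:ℝ)) ^ k ≤ (1 + ((a + t : ℕ):ℝ)) ^ k * (1 + (t:ℝ)) ^ k := by
  rw [← mul_pow]
  apply pow_le_pow_left₀ (by positivity)
  push_cast
  nlinarith [Nat.cast_nonneg (α := ℝ) a, Nat.cast_nonneg (α := ℝ) t]

lemma waux6 (k i j : ℕ) (x : ℝ) (hx : 0 ≤ x) :
    ((min i j : ℕ):ℝ) * (x * ((1 + (i:ℝ)) ^ k * (1 + (j:ℝ)) ^ k))
      + x * ((1 + (i:ℝ)) ^ k * (1 + (j:ℝ)) ^ k)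
      ≤ x * ((1 + (i:ℝ)) ^ (k + 1) * (1 + (j:ℝ)) ^ (k + 1)) := by
  have hm : ((min i j : ℕ):ℝ) + 1 ≤ (1 + (i:ℝ)) * (1 + (j:ℝ)) := by
    have h1 : ((min i j : ℕ):ℝ) ≤ (i:ℝ) := by
      have : min i j ≤ i := min_le_left _ _
      exact_mod_cast this
    nlinarith [Nat.cast_nonneg (α := ℝ) i, Nat.cast_nonneg (α := ℝ) j]
  have hp : (0:ℝ) ≤ (1 + (i:ℝ)) ^ k * (1 + (j:ℝ)) ^ k := by positivity
  calc ((min i j : ℕ):ℝ) * (x * ((1 + (i:ℝ)) ^ k * (1 + (j:ℝ)) ^ k))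
        + x * ((1 + (i:ℝ)) ^ k * (1 + (j:ℝ)) ^ k)
      = (((min i j : ℕ):ℝ) + 1) * (x * ((1 + (i:ℝ)) ^ k * (1 + (j:ℝ)) ^ k)) := by ring
    _ ≤ ((1 + (i:ℝ)) * (1 + (j:ℝ))) * (x * ((1 + (i:ℝ)) ^ k * (1 + (j:ℝ)) ^ k)) :=
        mul_le_mul_of_nonneg_right hm (by positivity)
    _ = x * ((1 + (i:ℝ)) ^ (k + 1) * (1 + (j:ℝ)) ^ (k + 1)) := by ring

include h1 h2 in
lemma part1 (k N : ℕ)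
    (hamN : ∀ m n : ℕ, N ≤ m ∨ N ≤ n → am (m, n) = 0)
    (hbN : ∀ p : ℤ, N ≤ p.natAbs → b p = 0)
    (hcN : ∀ m n : ℕ, N ≤ m ∨ N ≤ n → c (m, n) = 0) :
    ((am.sum fun ij x => ‖x‖ * (1 + (ij.1 : ℝ) + (ij.2 : ℝ)) ^ k)
        + b.sum fun p x => ‖x‖ * (1 + (p.natAbs : ℝ)) ^ k)
      ≤ c.sum fun ij x =>
          ‖x‖ * ((1 + (ij.1 : ℝ)) ^ (k + 1) * (1 + (ij.2 : ℝ)) ^ (k + 1)) := by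
  classical
  have ham' : ∀ m n : ℕ, N ≤ m → am (m, n) = 0 := fun m n h => hamN m n (Or.inl h)
  set BB : Finset (ℕ × ℕ) := Finset.range (2*N+2) ×ˢ Finset.range (2*N+2) with hBB
  set H1 : ℕ × (ℕ × ℕ) → ℝ := fun q =>
    if q.1 ≤ q.2.1 ∧ q.1 ≤ q.2.2
    then ‖c q.2‖ * ((1 + (q.2.1:ℝ)) ^ k * (1 + (q.2.2:ℝ)) ^ k) else 0 with hH1
  set H2 : ℕ × (ℕ × ℕ) → ℝ := fun q =>
    if q.1 = min q.2.1 q.2.2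
    then ‖c q.2‖ * ((1 + (q.2.1:ℝ)) ^ k * (1 + (q.2.2:ℝ)) ^ k) else 0 with hH2
  have hH1nn : ∀ q, 0 ≤ H1 q := fun q => by
    rw [hH1]; dsimp only; split_ifs
    · positivity
    · exact le_refl 0
  have hH2nn : ∀ q, 0 ≤ H2 q := fun q => by
    rw [hH2]; dsimp only; split_ifs
    · positivity
    · exact le_refl 0
  -- Step 1: am part
  have stepA : (am.sum fun ij x => ‖x‖ * (1 + (ij.1 : ℝ) + (ij.2 : ℝ)) ^ k)
      ≤ ∑ q ∈ Finset.Icc 1 N ×ˢ BB, H1 q := by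
    have h1' : (am.sum fun ij x => ‖x‖ * (1 + (ij.1 : ℝ) + (ij.2 : ℝ)) ^ k)
        ≤ ∑ q ∈ am.support ×ˢ Finset.range N,
            ‖c (q.1.1 + q.2 + 1, q.1.2 + q.2 + 1)‖ * (1 + (q.1.1:ℝ) + (q.1.2:ℝ)) ^ k := by
      rw [Finsupp.sum, Finset.sum_product]
      apply Finset.sum_le_sum
      intro s _
      have hid : am s = -∑ t ∈ Finset.range N, c (s.1 + t + 1, s.2 + t + 1) := by
        rw [← Prod.mk.eta (p := s)]
        exact AmId a c b am h1 h2 ham' s.1 s.2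
      rw [hid, norm_neg]
      calc ‖∑ t ∈ Finset.range N, c (s.1 + t + 1, s.2 + t + 1)‖ * (1 + (s.1:ℝ) + (s.2:ℝ)) ^ k
          ≤ (∑ t ∈ Finset.range N, ‖c (s.1 + t + 1, s.2 + t + 1)‖) * (1 + (s.1:ℝ) + (s.2:ℝ)) ^ k :=
            mul_le_mul_of_nonneg_right (norm_sum_le _ _) (by positivity)
        _ = ∑ t ∈ Finset.range N, ‖c (s.1 + t + 1, s.2 + t + 1)‖ * (1 + (s.1:ℝ) + (s.2:ℝ)) ^ k :=
            Finset.sum_mul _ _ _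
    refine le_trans h1' ?_
    apply sum_le_sum_inj _ _ (fun q => (q.2 + 1, (q.1.1 + q.2 + 1, q.1.2 + q.2 + 1))) _ _
      (fun q _ => hH1nn q) (fun q _ => by positivity)
    · intro q _
      rw [hH1]
      dsimp only
      rw [if_pos ⟨by omega, by omega⟩]
      exact mul_le_mul_of_nonneg_left (waux4 k q.1.1 q.1.2 q.2) (norm_nonneg _)
    · intro q hq _
      rw [Finset.mem_product] at hq
      rw [Finset.mem_product]
      have h1m : q.1.1 < N ∧ q.1.2 < N := by
        by_contra hcon
        have : am (q.1.1, q.1.2) = 0 := hamN _ _ (by omega)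
        rw [Prod.mk.eta] at this
        exact Finsupp.mem_support_iff.mp hq.1 this
      have h2m : q.2 < N := Finset.mem_range.mp hq.2
      constructor
      · rw [Finset.mem_Icc]; omega
      · rw [hBB, Finset.mem_product, Finset.mem_range, Finset.mem_range]
        refine ⟨by dsimp only; omega, by dsimp only; omega⟩
    · intro q₁ _ q₂ _ _ _ h
      simp only [Prod.mk.injEq] at h
      exact Prod.ext (Prod.ext (by omega) (by omega)) (by omega)
  -- Step 2: b part
  have stepB : (b.sum fun p x => ‖x‖ * (1 + (p.natAbs : ℝ)) ^ k)
      ≤ ∑ q ∈ Finset.range (N + 1) ×ˢ BB, H2 q := by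
    have h2' : (b.sum fun p x => ‖x‖ * (1 + (p.natAbs : ℝ)) ^ k)
        ≤ ∑ q ∈ b.support ×ˢ Finset.range (N + 1),
            ‖c (if 0 ≤ q.1 then (q.1.natAbs + q.2, q.2) else (q.2, q.1.natAbs + q.2))‖
              * (1 + (q.1.natAbs:ℝ)) ^ k := by
      rw [Finsupp.sum, Finset.sum_product]
      apply Finset.sum_le_sum
      intro p _
      by_cases hp : 0 ≤ p
      · have hid : b p = ∑ t ∈ Finset.range (N + 1), c (p.natAbs + t, t) := by
          have hb1 := B1Id a c b am h1 h2 ham' p.natAbs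
          rwa [Int.natAbs_of_nonneg hp] at hb1
        rw [hid]
        calc ‖∑ t ∈ Finset.range (N+1), c (p.natAbs + t, t)‖ * (1 + (p.natAbs:ℝ)) ^ k
            ≤ (∑ t ∈ Finset.range (N+1), ‖c (p.natAbs + t, t)‖) * (1 + (p.natAbs:ℝ)) ^ k :=
              mul_le_mul_of_nonneg_right (norm_sum_le _ _) (by positivity)
          _ = ∑ t ∈ Finset.range (N+1), ‖c (p.natAbs + t, t)‖ * (1 + (p.natAbs:ℝ)) ^ k :=
              Finset.sum_mul _ _ _
          _ = ∑ t ∈ Finset.range (N+1),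
                ‖c (if 0 ≤ p then (p.natAbs + t, t) else (t, p.natAbs + t))‖
                  * (1 + (p.natAbs:ℝ)) ^ k := by
              apply Finset.sum_congr rfl
              intro t _
              rw [if_pos hp]
      · have hpn : -((p.natAbs : ℕ) : ℤ) = p := by omega
        have hid : b p = ∑ t ∈ Finset.range (N + 1), c (t, p.natAbs + t) := by
          have hb2 := B2Id a c b am h1 h2 ham' p.natAbs
          rwa [hpn] at hb2
        rw [hid]
        calc ‖∑ t ∈ Finset.range (N+1), c (t, p.natAbs + t)‖ * (1 + (p.natAbs:ℝ)) ^ k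
            ≤ (∑ t ∈ Finset.range (N+1), ‖c (t, p.natAbs + t)‖) * (1 + (p.natAbs:ℝ)) ^ k :=
              mul_le_mul_of_nonneg_right (norm_sum_le _ _) (by positivity)
          _ = ∑ t ∈ Finset.range (N+1), ‖c (t, p.natAbs + t)‖ * (1 + (p.natAbs:ℝ)) ^ k :=
              Finset.sum_mul _ _ _
          _ = ∑ t ∈ Finset.range (N+1),
                ‖c (if 0 ≤ p then (p.natAbs + t, t) else (t, p.natAbs + t))‖
                  * (1 + (p.natAbs:ℝ)) ^ k := by
              apply Finset.sum_congr rfl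
              intro t _
              rw [if_neg hp]
    refine le_trans h2' ?_
    apply sum_le_sum_inj _ _
      (fun q => (q.2, if 0 ≤ q.1 then (q.1.natAbs + q.2, q.2) else (q.2, q.1.natAbs + q.2))) _ _
      (fun q _ => hH2nn q) (fun q _ => by positivity)
    · intro q _
      rw [hH2]
      by_cases hp : 0 ≤ q.1
      · rw [if_pos hp]
        dsimp only
        rw [if_pos (by omega : q.2 = min (q.1.natAbs + q.2) q.2)]
        exact mul_le_mul_of_nonneg_left (waux5 k q.1.natAbs q.2) (norm_nonneg _)
      · rw [if_neg hp]
        dsimp only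
        rw [if_pos (by omega : q.2 = min q.2 (q.1.natAbs + q.2))]
        have := waux5 k q.1.natAbs q.2
        calc ‖c (q.2, q.1.natAbs + q.2)‖ * (1 + (q.1.natAbs:ℝ)) ^ k
            ≤ ‖c (q.2, q.1.natAbs + q.2)‖
                * ((1 + ((q.1.natAbs + q.2 : ℕ):ℝ)) ^ k * (1 + (q.2:ℝ)) ^ k) :=
              mul_le_mul_of_nonneg_left this (norm_nonneg _)
          _ = ‖c (q.2, q.1.natAbs + q.2)‖
                * ((1 + (q.2:ℝ)) ^ k * (1 + ((q.1.natAbs + q.2 : ℕ):ℝ)) ^ k) := by ring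
    · intro q hq _
      rw [Finset.mem_product] at hq
      rw [Finset.mem_product]
      have h1m : q.1.natAbs < N := by
        by_contra hcon
        exact Finsupp.mem_support_iff.mp hq.1 (hbN q.1 (by omega))
      have h2m : q.2 < N + 1 := Finset.mem_range.mp hq.2
      constructor
      · rw [Finset.mem_range]; omega
      · rw [hBB, Finset.mem_product, Finset.mem_range, Finset.mem_range]
        split_ifs <;> constructor <;> dsimp only <;> omega
    · intro q₁ _ q₂ _ _ _ h
      simp only [Prod.mk.injEq] at h
      obtain ⟨ht, hrest⟩ := h
      split_ifs at hrest with hs1 hs2 hs2 <;> simp only [Prod.mk.injEq] at hrest <;>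
        exact Prod.ext (by omega) (by omega)
  -- Step 3: collapse
  have step3 : (∑ q ∈ Finset.Icc 1 N ×ˢ BB, H1 q) + (∑ q ∈ Finset.range (N + 1) ×ˢ BB, H2 q)
      ≤ ∑ s ∈ BB, ‖c s‖ * ((1 + (s.1:ℝ)) ^ (k + 1) * (1 + (s.2:ℝ)) ^ (k + 1)) := by
    have e1 : ∑ q ∈ Finset.Icc 1 N ×ˢ BB, H1 q
        ≤ ∑ s ∈ BB, ((min s.1 s.2 : ℕ):ℝ) * (‖c s‖ * ((1 + (s.1:ℝ)) ^ k * (1 + (s.2:ℝ)) ^ k)) := by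
      rw [Finset.sum_product, Finset.sum_comm]
      apply Finset.sum_le_sum
      intro s _
      rw [hH1]
      dsimp only
      calc (∑ t ∈ Finset.Icc 1 N,
            if t ≤ s.1 ∧ t ≤ s.2
            then ‖c s‖ * ((1 + (s.1:ℝ)) ^ k * (1 + (s.2:ℝ)) ^ k) else 0)
          = ∑ t ∈ (Finset.Icc 1 N).filter (fun t => t ≤ s.1 ∧ t ≤ s.2),
              ‖c s‖ * ((1 + (s.1:ℝ)) ^ k * (1 + (s.2:ℝ)) ^ k) := (Finset.sum_filter _ _).symm
        _ = (((Finset.Icc 1 N).filter (fun t => t ≤ s.1 ∧ t ≤ s.2)).card : ℝ)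
              * (‖c s‖ * ((1 + (s.1:ℝ)) ^ k * (1 + (s.2:ℝ)) ^ k)) := by
            rw [Finset.sum_const, nsmul_eq_mul]
        _ ≤ ((min s.1 s.2 : ℕ):ℝ) * (‖c s‖ * ((1 + (s.1:ℝ)) ^ k * (1 + (s.2:ℝ)) ^ k)) := by
            apply mul_le_mul_of_nonneg_right _ (by positivity)
            have hsub : (Finset.Icc 1 N).filter (fun t => t ≤ s.1 ∧ t ≤ s.2)
                ⊆ Finset.Icc 1 (min s.1 s.2) := by
              intro t ht
              rw [Finset.mem_filter, Finset.mem_Icc] at ht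
              rw [Finset.mem_Icc]
              omega
            have := Finset.card_le_card hsub
            rw [Nat.card_Icc] at this
            have : ((Finset.Icc 1 N).filter (fun t => t ≤ s.1 ∧ t ≤ s.2)).card ≤ min s.1 s.2 := by
              omega
            exact_mod_cast this
    have e2 : ∑ q ∈ Finset.range (N + 1) ×ˢ BB, H2 q
        ≤ ∑ s ∈ BB, ‖c s‖ * ((1 + (s.1:ℝ)) ^ k * (1 + (s.2:ℝ)) ^ k) := by
      rw [Finset.sum_product, Finset.sum_comm]
      apply Finset.sum_le_sum
      intro s _
      rw [hH2]
      dsimp only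
      rw [Finset.sum_ite_eq' (Finset.range (N + 1)) (min s.1 s.2)
        (fun _ => ‖c s‖ * ((1 + (s.1:ℝ)) ^ k * (1 + (s.2:ℝ)) ^ k))]
      split_ifs
      · exact le_refl _
      · positivity
    calc (∑ q ∈ Finset.Icc 1 N ×ˢ BB, H1 q) + (∑ q ∈ Finset.range (N + 1) ×ˢ BB, H2 q)
        ≤ (∑ s ∈ BB, ((min s.1 s.2 : ℕ):ℝ) * (‖c s‖ * ((1 + (s.1:ℝ)) ^ k * (1 + (s.2:ℝ)) ^ k)))
            + ∑ s ∈ BB, ‖c s‖ * ((1 + (s.1:ℝ)) ^ k * (1 + (s.2:ℝ)) ^ k) := add_le_add e1 e2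
      _ = ∑ s ∈ BB, (((min s.1 s.2 : ℕ):ℝ) * (‖c s‖ * ((1 + (s.1:ℝ)) ^ k * (1 + (s.2:ℝ)) ^ k))
            + ‖c s‖ * ((1 + (s.1:ℝ)) ^ k * (1 + (s.2:ℝ)) ^ k)) := (Finset.sum_add_distrib).symm
      _ ≤ ∑ s ∈ BB, ‖c s‖ * ((1 + (s.1:ℝ)) ^ (k + 1) * (1 + (s.2:ℝ)) ^ (k + 1)) :=
          Finset.sum_le_sum fun s _ => waux6 k s.1 s.2 ‖c s‖ (norm_nonneg _)
  -- Step 4: back to c.sum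
  have step4 : ∑ s ∈ BB, ‖c s‖ * ((1 + (s.1:ℝ)) ^ (k + 1) * (1 + (s.2:ℝ)) ^ (k + 1))
      = c.sum fun ij x => ‖x‖ * ((1 + (ij.1 : ℝ)) ^ (k + 1) * (1 + (ij.2 : ℝ)) ^ (k + 1)) := by
    rw [Finsupp.sum]
    apply (Finset.sum_subset _ _).symm
    · intro s hs
      rw [hBB, Finset.mem_product, Finset.mem_range, Finset.mem_range]
      have : s.1 < N ∧ s.2 < N := by
        by_contra hcon
        have h0 : c (s.1, s.2) = 0 := hcN _ _ (by omega)
        rw [Prod.mk.eta] at h0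
        exact Finsupp.mem_support_iff.mp hs h0
      omega
    · intro s _ hns
      rw [Finsupp.notMem_support_iff.mp hns, norm_zero, zero_mul]
  calc ((am.sum fun ij x => ‖x‖ * (1 + (ij.1 : ℝ) + (ij.2 : ℝ)) ^ k)
        + b.sum fun p x => ‖x‖ * (1 + (p.natAbs : ℝ)) ^ k)
      ≤ (∑ q ∈ Finset.Icc 1 N ×ˢ BB, H1 q) + ∑ q ∈ Finset.range (N + 1) ×ˢ BB, H2 q :=
        add_le_add stepA stepB
    _ ≤ ∑ s ∈ BB, ‖c s‖ * ((1 + (s.1:ℝ)) ^ (k + 1) * (1 + (s.2:ℝ)) ^ (k + 1)) := step3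
    _ = _ := step4

end MainParts

end

/-- Compare the norms `‖a‖_k = Σ |c_{ij}| (1+i)^k (1+j)^k` (coefficients in the basis
`v^i u^j`) and `‖a‖'_k = Σ |a_{ij}| (1+i+j)^k + Σ |b_p| (1+|p|)^k` (coefficients in the
basis `1, v^p, u^p, e_{i,j}`) of an element `a` of the algebraic Toeplitz algebra:
`‖a‖'_k ≤ ‖a‖_{k+1}` and `‖a‖_k ≤ (4^k + 1) ‖a‖'_{2k}`.  In particular the two
families of norms are equivalent. -/
theorem stmt14 (k : ℕ) (a : Talg) (c : ℕ × ℕ →₀ ℂ) (b : ℤ →₀ ℂ) (am : ℕ × ℕ →₀ ℂ)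
    (h1 : a = c.sum fun ij x => x • (Tv ^ ij.1 * Tu ^ ij.2))
    (h2 : a = (b.sum fun p x => x • Tz p) + am.sum fun ij x => x • Te ij.1 ij.2) :
    ((am.sum fun ij x => ‖x‖ * (1 + (ij.1 : ℝ) + (ij.2 : ℝ)) ^ k)
        + b.sum fun p x => ‖x‖ * (1 + (p.natAbs : ℝ)) ^ k)
      ≤ (c.sum fun ij x =>
          ‖x‖ * ((1 + (ij.1 : ℝ)) ^ (k + 1) * (1 + (ij.2 : ℝ)) ^ (k + 1))) ∧
    (c.sum fun ij x => ‖x‖ * ((1 + (ij.1 : ℝ)) ^ k * (1 + (ij.2 : ℝ)) ^ k))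
      ≤ (4 ^ k + 1) *
        ((am.sum fun ij x => ‖x‖ * (1 + (ij.1 : ℝ) + (ij.2 : ℝ)) ^ (2 * k))
          + b.sum fun p x => ‖x‖ * (1 + (p.natAbs : ℝ)) ^ (2 * k)) := by
  classical
  set Sc := c.support.sup (fun s : ℕ × ℕ => max s.1 s.2) with hSc
  set Sa := am.support.sup (fun s : ℕ × ℕ => max s.1 s.2) with hSa
  set Sb := b.support.sup Int.natAbs with hSb
  set N := max (max (Sc + 1) (Sa + 1)) (Sb + 1) with hN
  have hcN : ∀ m n : ℕ, N ≤ m ∨ N ≤ n → c (m, n) = 0 := by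
    intro m n h
    by_contra h0
    have hmem : (m, n) ∈ c.support := Finsupp.mem_support_iff.mpr h0
    have hle : max m n ≤ Sc := Finset.le_sup (f := fun s : ℕ × ℕ => max s.1 s.2) hmem
    omega
  have hamN : ∀ m n : ℕ, N ≤ m ∨ N ≤ n → am (m, n) = 0 := by
    intro m n h
    by_contra h0
    have hmem : (m, n) ∈ am.support := Finsupp.mem_support_iff.mpr h0
    have hle : max m n ≤ Sa := Finset.le_sup (f := fun s : ℕ × ℕ => max s.1 s.2) hmem
    omega
  have hbN : ∀ p : ℤ, N ≤ p.natAbs → b p = 0 := by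
    intro p h
    by_contra h0
    have hmem : p ∈ b.support := Finsupp.mem_support_iff.mpr h0
    have hle : p.natAbs ≤ Sb := Finset.le_sup (f := Int.natAbs) hmem
    omega
  exact ⟨part1 a c b am h1 h2 k N hamN hbN hcN, part2 a c b am h1 h2 k⟩
end
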